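/- Suppose A = A_1 ⊞_s A_2 and Ā = Ā_1 ⊞_s Ā_2 are both in M_j, with A_1, Ā_1 ∈ M_g and A_2, Ā_2 ∈ M_h, g + h = j, and the same off-block value s. If χ(A_1) ≥ χ(Ā_1) and χ(A_2) ≥ χ(Ā_2), then χ(A) ≥ χ(Ā). -/

import Mathlib

/-- Membership in the class `M_j` of ultrametric matrices from the paper. -/
def MemUltra (η : ℝ) {ι : Type*} [Fintype ι] [DecidableEq ι] (A : Matrix ι ι ℝ) : Prop :=
  A.IsSymm ∧ (∀ i, A i i = 1) ∧
  (∀ i l, i ≠ l → 0 ≤ A i l ∧ A i l ≤ 1 - η) ∧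
  (∀ i l p, i ≠ l → l ≠ p → i ≠ p → min (A l p) (A i p) ≤ A i l)

/-- `χ(B)`: the sum of all the entries of `B⁻¹`. -/
noncomputable def chi {ι : Type*} [Fintype ι] [DecidableEq ι] (B : Matrix ι ι ℝ) : ℝ :=
  ∑ i, ∑ l, B⁻¹ i l

/-- The block sum `A₁ ⊞_s A₂`. -/
def blockSum {g h : ℕ} (A₁ : Matrix (Fin g) (Fin g) ℝ) (A₂ : Matrix (Fin h) (Fin h) ℝ)
    (s : ℝ) : Matrix (Fin g ⊕ Fin h) (Fin g ⊕ Fin h) ℝ :=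
  Matrix.fromBlocks A₁ (Matrix.of fun _ _ => s) (Matrix.of fun _ _ => s) A₂

open Matrix

lemma sum_shift {ι : Type} [Fintype ι] (A : Matrix ι ι ℝ) (c : ℝ) (v : ι → ℝ) :
    ∑ i, ∑ l, A i l * v i * v l
      = c * (∑ i, v i)^2 + ∑ i, ∑ l, (A i l - c) * v i * v l := by
  rw [sq, Finset.sum_mul_sum, Finset.mul_sum, ← Finset.sum_add_distrib]
  refine Finset.sum_congr rfl fun i _ => ?_
  rw [Finset.mul_sum, ← Finset.sum_add_distrib]
  exact Finset.sum_congr rfl fun l _ => by ring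

lemma key : ∀ (n : ℕ) (ι : Type) [Fintype ι] [DecidableEq ι],
    Fintype.card ι ≤ n → ∀ (η : ℝ) (A : Matrix ι ι ℝ) (s : ℝ), 0 < η → MemUltra η A →
    0 ≤ s → s ≤ 1 - η → (∀ i l, i ≠ l → s ≤ A i l) → ∀ v : ι → ℝ,
    s * (∑ i, v i)^2 + η * (∑ i, (v i)^2) ≤ ∑ i, ∑ l, A i l * v i * v l := by
  intro n
  induction n with
  | zero =>
    intro ι _ _ hcard η A s hη hA hs0 hs1 hsA v
    have : IsEmpty ι := Fintype.card_eq_zero_iff.mp (Nat.le_zero.mp hcard)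
    simp
  | succ n ih =>
    intro ι _ _ hcard η A s hη hA hs0 hs1 hsA v
    obtain ⟨hsymm, hdiag, hbnd, hultra⟩ := hA
    by_cases hpair : ∃ p : ι × ι, p.1 ≠ p.2
    · -- there exist two distinct indices
      classical
      set P : Finset (ι × ι) := Finset.univ.filter (fun p : ι × ι => p.1 ≠ p.2) with hP
      have hPne : P.Nonempty := by
        obtain ⟨p, hp⟩ := hpair
        exact ⟨p, by simp [hP, hp]⟩
      set img : Finset ℝ := P.image (fun p => A p.1 p.2) with himg
      have himgne : img.Nonempty := hPne.image _
      set t : ℝ := img.min' himgne with ht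
      have htle : ∀ i l : ι, i ≠ l → t ≤ A i l := by
        intro i l hil
        exact Finset.min'_le _ _ (Finset.mem_image.mpr ⟨(i, l), by simp [hP, hil], rfl⟩)
      obtain ⟨p₀, hp₀P, hp₀⟩ := Finset.mem_image.mp (Finset.min'_mem _ himgne)
      set i₀ := p₀.1
      set l₀ := p₀.2
      have hi₀l₀ : i₀ ≠ l₀ := by simpa [hP] using hp₀P
      have hAil : A i₀ l₀ = t := hp₀
      have hst : s ≤ t := hAil ▸ hsA _ _ hi₀l₀
      have ht0 : 0 ≤ t := le_trans hs0 hst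
      have ht1 : t ≤ 1 - η := hAil ▸ (hbnd _ _ hi₀l₀).2
      have h1t : 0 < 1 - t := by linarith
      -- the class C of i₀
      set C : Finset ι := Finset.univ.filter (fun i => i = i₀ ∨ t < A i i₀) with hC
      have hi₀C : i₀ ∈ C := by simp [hC]
      have hl₀C : l₀ ∉ C := by
        simp only [hC, Finset.mem_filter, Finset.mem_univ, true_and]
        push_neg
        refine ⟨fun hh => hi₀l₀ hh.symm, ?_⟩
        rw [← hsymm.apply l₀ i₀, hAil]
      have hcross : ∀ i ∈ C, ∀ l, l ∉ C → A i l = t := by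
        intro i hi l hl
        have hlni₀ : l ≠ i₀ := fun hh => hl (hh ▸ hi₀C)
        have hlA : ¬ t < A l i₀ := by
          intro hh; exact hl (by simp [hC, hh])
        have hil : i ≠ l := fun hh => hl (hh ▸ hi)
        refine le_antisymm ?_ (htle _ _ hil)
        by_contra hgt
        push_neg at hgt
        rcases eq_or_ne i i₀ with hii₀ | hii₀
        · subst hii₀
          exact hlA (by rw [← hsymm.apply l i₀]; exact hgt)
        · have hiA : t < A i i₀ := by
            rcases (by simpa [hC] using hi : i = i₀ ∨ t < A i i₀) with h' | h'
            · exact absurd h' hii₀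
            · exact h'
          have := hultra l i₀ i hlni₀ (fun hh => hii₀ hh.symm) (fun hh => hil hh.symm)
          rw [hsymm.apply i i₀, hsymm.apply i l] at this
          exact hlA (lt_of_lt_of_le (lt_min hiA hgt) this)
      -- restricted matrices
      set η' : ℝ := η / (1 - t) with hη'
      have hη'pos : 0 < η' := div_pos hη h1t
      have hη'1 : η' ≤ 1 := by
        rw [div_le_one h1t]; linarith
      set B : Matrix ↥C ↥C ℝ := fun i l => if (i : ι) = (l : ι) then 1 else (A i l - t) / (1 - t)
        with hB
      have hBsymm : B.IsSymm := by
        ext i l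
        rw [Matrix.transpose_apply]
        simp only [hB]
        rcases eq_or_ne (i : ι) (l : ι) with hh | hh
        · simp [hh]
        · rw [if_neg (fun e => hh e.symm), if_neg hh, hsymm.apply i l]
      have hBultra : MemUltra η' B := by
        refine ⟨hBsymm, fun i => by simp [hB], ?_, ?_⟩
        · intro i l hil
          have hil' : (i : ι) ≠ (l : ι) := fun e => hil (Subtype.ext e)
          constructor
          · rw [hB]; simp only [if_neg hil']
            exact div_nonneg (by linarith [htle _ _ hil']) h1t.le
          · rw [hB]; simp only [if_neg hil']
            rw [div_le_iff₀ h1t]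
            have h2 := (hbnd _ _ hil').2
            have h3 : η' * (1 - t) = η := div_mul_cancel₀ η (ne_of_gt h1t)
            nlinarith
        · intro i l p hil hlp hip
          have hil' : (i : ι) ≠ (l : ι) := fun e => hil (Subtype.ext e)
          have hlp' : (l : ι) ≠ (p : ι) := fun e => hlp (Subtype.ext e)
          have hip' : (i : ι) ≠ (p : ι) := fun e => hip (Subtype.ext e)
          rw [hB]
          simp only [if_neg hil', if_neg hlp', if_neg hip']
          rw [min_div_div_right h1t.le, min_sub_sub_right]
          have := hultra i l p hil' hlp' hip'
          gcongr
      -- restriction to the complement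
      set A' : Matrix ↥(Cᶜ) ↥(Cᶜ) ℝ := fun i l => A i l with hA'
      have hA'ultra : MemUltra η A' := by
        refine ⟨?_, fun i => hdiag i, ?_, ?_⟩
        · ext i l
          exact hsymm.apply (i : ι) (l : ι)
        · intro i l hil
          exact hbnd i l (fun e => hil (Subtype.ext e))
        · intro i l p hil hlp hip
          exact hultra i l p (fun e => hil (Subtype.ext e)) (fun e => hlp (Subtype.ext e))
            (fun e => hip (Subtype.ext e))
      have hcardC : Fintype.card ↥C ≤ n := by
        have h1 : C ⊆ Finset.univ.erase l₀ :=
          fun x hx => Finset.mem_erase.mpr ⟨fun e => hl₀C (e ▸ hx), Finset.mem_univ x⟩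
        have h2 := Finset.card_le_card h1
        rw [Finset.card_erase_of_mem (Finset.mem_univ l₀), Finset.card_univ] at h2
        rw [Fintype.card_coe]
        omega
      have hcardD : Fintype.card ↥(Cᶜ) ≤ n := by
        have h1 : Cᶜ ⊆ Finset.univ.erase i₀ := fun x hx => Finset.mem_erase.mpr
          ⟨fun e => (Finset.mem_compl.mp hx) (e ▸ hi₀C), Finset.mem_univ x⟩
        have h2 := Finset.card_le_card h1
        rw [Finset.card_erase_of_mem (Finset.mem_univ i₀), Finset.card_univ] at h2
        rw [Fintype.card_coe]
        omega
      -- induction hypotheses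
      have hIB := ih ↥C hcardC η' B 0 hη'pos hBultra le_rfl (by linarith)
        (fun i l hil => (hBultra.2.2.1 i l hil).1) (fun i => v i)
      have hIA' := ih ↥(Cᶜ) hcardD η A' t hη hA'ultra ht0 ht1
        (fun i l hil => htle i l (fun e => hil (Subtype.ext e))) (fun i => v i)
      -- sum decompositions
      have e1 := sum_shift A t v
      have e2 : ∑ i, ∑ l, (A i l - t) * v i * v l
          = (∑ i ∈ C, ∑ l ∈ C, (A i l - t) * v i * v l)
            + ∑ i ∈ Cᶜ, ∑ l ∈ Cᶜ, (A i l - t) * v i * v l := by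
        rw [← Finset.sum_add_sum_compl C (fun i => ∑ l, (A i l - t) * v i * v l)]
        congr 1
        · refine Finset.sum_congr rfl fun i hi => ?_
          rw [← Finset.sum_add_sum_compl C (fun l => (A i l - t) * v i * v l)]
          have hz : ∑ l ∈ Cᶜ, (A i l - t) * v i * v l = 0 :=
            Finset.sum_eq_zero fun l hl => by
              rw [hcross i hi l (Finset.mem_compl.mp hl)]; ring
          rw [hz, add_zero]
        · refine Finset.sum_congr rfl fun i hi => ?_
          rw [← Finset.sum_add_sum_compl C (fun l => (A i l - t) * v i * v l)]
          have hz : ∑ l ∈ C, (A i l - t) * v i * v l = 0 :=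
            Finset.sum_eq_zero fun l hl => by
              rw [hsymm.apply l i, hcross l hl i (Finset.mem_compl.mp hi)]; ring
          rw [hz, zero_add]
      have hCsq : ∑ i : ↥C, (v i)^2 = ∑ i ∈ C, (v i)^2 :=
        Finset.sum_coe_sort C (fun i => (v i)^2)
      have hDsq : ∑ i : ↥(Cᶜ), (v i)^2 = ∑ i ∈ Cᶜ, (v i)^2 :=
        Finset.sum_coe_sort (Cᶜ) (fun i => (v i)^2)
      have hsumsq : (∑ i ∈ C, (v i)^2) + ∑ i ∈ Cᶜ, (v i)^2 = ∑ i, (v i)^2 :=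
        Finset.sum_add_sum_compl C (fun i => (v i)^2)
      -- the C part
      have e3 : (1 - t) * ∑ i : ↥C, ∑ l : ↥C, B i l * v i * v l
          = ∑ i ∈ C, ∑ l ∈ C, (A i l - t) * v i * v l := by
        rw [Finset.mul_sum]
        have hpt : ∀ i : ↥C, (1 - t) * ∑ l : ↥C, B i l * v i * v l
            = ∑ l : ↥C, (A (i : ι) (l : ι) - t) * v i * v l := by
          intro i
          rw [Finset.mul_sum]
          refine Finset.sum_congr rfl fun l _ => ?_
          rcases eq_or_ne (i : ι) (l : ι) with hh | hh
          · rw [hB]; simp only [if_pos hh]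
            rw [hh, hdiag]; ring
          · rw [hB]; simp only [if_neg hh]
            have hne : (1 : ℝ) - t ≠ 0 := ne_of_gt h1t
            field_simp
          
        rw [Finset.sum_congr rfl (fun i _ => hpt i)]
        rw [← Finset.sum_coe_sort C (fun i => ∑ l ∈ C, (A i l - t) * v i * v l)]
        refine Finset.sum_congr rfl fun i _ => ?_
        exact Finset.sum_coe_sort C (fun l => (A (i : ι) l - t) * v i * v l)
      have hCpart : η * ∑ i ∈ C, (v i)^2
          ≤ ∑ i ∈ C, ∑ l ∈ C, (A i l - t) * v i * v l := by
        rw [← e3]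
        have h5 : η' * ∑ i : ↥C, (v i)^2 ≤ ∑ i : ↥C, ∑ l : ↥C, B i l * v i * v l := by
          simpa using hIB
        have h6 : η * ∑ i ∈ C, (v i)^2 = (1 - t) * (η' * ∑ i : ↥C, (v i)^2) := by
          rw [hCsq, hη']
          have hne : (1 : ℝ) - t ≠ 0 := ne_of_gt h1t
          field_simp
        rw [h6]
        exact mul_le_mul_of_nonneg_left h5 h1t.le
      -- the complement part
      have e4 : ∑ i : ↥(Cᶜ), ∑ l : ↥(Cᶜ), (A' i l - t) * v i * v l
          = ∑ i ∈ Cᶜ, ∑ l ∈ Cᶜ, (A i l - t) * v i * v l := by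
        rw [← Finset.sum_coe_sort (Cᶜ) (fun i => ∑ l ∈ Cᶜ, (A i l - t) * v i * v l)]
        refine Finset.sum_congr rfl fun i _ => ?_
        exact Finset.sum_coe_sort (Cᶜ) (fun l => (A (i : ι) l - t) * v i * v l)
      have hDpart : η * ∑ i ∈ Cᶜ, (v i)^2
          ≤ ∑ i ∈ Cᶜ, ∑ l ∈ Cᶜ, (A i l - t) * v i * v l := by
        rw [← e4]
        have e5 := sum_shift A' t (fun i => v i)
        rw [hDsq] at hIA'
        linarith [hIA', e5]
      -- put everything together
      rw [e1, e2]
      nlinarith [sq_nonneg (∑ i, v i), hCpart, hDpart, hsumsq, hst]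
    · -- at most one index
      push_neg at hpair
      have hsub : Subsingleton ι := ⟨fun a b => hpair (a, b)⟩
      rcases isEmpty_or_nonempty ι with he | hne
      · simp
      · obtain ⟨a⟩ := hne
        have hu : Unique ι := ⟨⟨a⟩, fun b => Subsingleton.elim b a⟩
        simp only [Fintype.sum_unique]
        rw [hdiag]
        nlinarith [sq_nonneg (v default)]


lemma dot_qf {ι : Type} [Fintype ι] (A : Matrix ι ι ℝ) (v : ι → ℝ) :
    v ⬝ᵥ A *ᵥ v = ∑ i, ∑ l, A i l * v i * v l := by
  simp only [dotProduct, Matrix.mulVec, Finset.mul_sum]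
  exact Finset.sum_congr rfl fun i _ => Finset.sum_congr rfl fun l _ => by ring

lemma sum_sq_pos {ι : Type} [Fintype ι] (x : ι → ℝ) (hx : x ≠ 0) : 0 < ∑ i, (x i)^2 := by
  obtain ⟨i, hi⟩ := Function.ne_iff.mp hx
  exact Finset.sum_pos' (fun j _ => sq_nonneg _) ⟨i, Finset.mem_univ i, by
    rcases (sq_nonneg (x i)).lt_or_eq with h | h
    · exact h
    · exact absurd (pow_eq_zero_iff (by norm_num) |>.mp h.symm) hi⟩

lemma isSymm_hermitian {ι : Type} [Fintype ι] (A : Matrix ι ι ℝ) (h : A.IsSymm) :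
    A.IsHermitian := by
  rw [Matrix.IsHermitian, Matrix.conjTranspose]
  ext i j
  simpa [Matrix.map_apply, Matrix.transpose_apply] using h.apply i j

lemma memUltra_posDef {ι : Type} [Fintype ι] [DecidableEq ι] {η s : ℝ} (hη : 0 < η)
    {A : Matrix ι ι ℝ} (hA : MemUltra η A) (hs0 : 0 ≤ s) (hs1 : s ≤ 1 - η)
    (hsA : ∀ i l, i ≠ l → s ≤ A i l) : A.PosDef := by
  refine Matrix.posDef_iff_dotProduct_mulVec.mpr ⟨isSymm_hermitian A hA.1, fun x hx => ?_⟩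
  have hk := key (Fintype.card ι) ι le_rfl η A s hη hA hs0 hs1 hsA x
  have hq : star x ⬝ᵥ A *ᵥ x = ∑ i, ∑ l, A i l * x i * x l := by
    simpa using dot_qf A x
  rw [hq]
  have := sum_sq_pos x hx
  nlinarith [sq_nonneg (∑ i, x i)]

lemma chi_eq_sum_mulVec {ι : Type} [Fintype ι] [DecidableEq ι] (A : Matrix ι ι ℝ) :
    chi A = ∑ i, (A⁻¹ *ᵥ (fun _ => (1:ℝ))) i := by
  simp [chi, Matrix.mulVec, dotProduct]

lemma chi_facts {ι : Type} [Fintype ι] [DecidableEq ι] {η s : ℝ} (hη : 0 < η)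
    {A : Matrix ι ι ℝ} (hA : MemUltra η A) (hs0 : 0 ≤ s) (hs1 : s ≤ 1 - η)
    (hsA : ∀ i l, i ≠ l → s ≤ A i l) : 0 ≤ chi A ∧ s * chi A < 1 := by
  have hPD := memUltra_posDef hη hA hs0 hs1 hsA
  set u : ι → ℝ := A⁻¹ *ᵥ (fun _ => (1:ℝ)) with hu
  have hAu : A *ᵥ u = fun _ => (1:ℝ) := by
    rw [hu, Matrix.mulVec_mulVec, Matrix.mul_nonsing_inv A hPD.det_pos.ne'.isUnit,
      Matrix.one_mulVec]
  have hx : chi A = ∑ i, u i := chi_eq_sum_mulVec A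
  have hq : ∑ i, ∑ l, A i l * u i * u l = ∑ i, u i := by
    rw [← dot_qf, hAu]
    simp [dotProduct]
  have hk := key (Fintype.card ι) ι le_rfl η A s hη hA hs0 hs1 hsA u
  rw [hq] at hk
  by_cases hu0 : u = 0
  · rw [hx]
    simp [hu0]
  · have hS2 : 0 < ∑ i, (u i)^2 := sum_sq_pos u hu0
    have hXpos : 0 < ∑ i, u i := by nlinarith [sq_nonneg (∑ i, u i)]
    rw [hx]
    constructor
    · linarith
    · nlinarith

lemma cross_sum {g h : ℕ} (s : ℝ) (x : Fin g ⊕ Fin h → ℝ) :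
    ∑ i : Fin g, ∑ l : Fin h, s * x (Sum.inl i) * x (Sum.inr l)
      = s * ((∑ i, x (Sum.inl i)) * (∑ i, x (Sum.inr i))) := by
  rw [Finset.sum_mul_sum, Finset.mul_sum]
  refine Finset.sum_congr rfl fun i _ => ?_
  rw [Finset.mul_sum]
  exact Finset.sum_congr rfl fun l _ => by ring

lemma blockSum_qf {g h : ℕ} (A₁ : Matrix (Fin g) (Fin g) ℝ) (A₂ : Matrix (Fin h) (Fin h) ℝ)
    (s : ℝ) (x : Fin g ⊕ Fin h → ℝ) :
    ∑ i, ∑ l, blockSum A₁ A₂ s i l * x i * x l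
      = (∑ i, ∑ l, A₁ i l * x (Sum.inl i) * x (Sum.inl l))
        + (∑ i, ∑ l, A₂ i l * x (Sum.inr i) * x (Sum.inr l))
        + 2 * s * ((∑ i, x (Sum.inl i)) * (∑ i, x (Sum.inr i))) := by
  rw [Fintype.sum_sum_type]
  have e1 : ∀ i : Fin g, ∑ l, blockSum A₁ A₂ s (Sum.inl i) l * x (Sum.inl i) * x l
      = (∑ l, A₁ i l * x (Sum.inl i) * x (Sum.inl l))
        + ∑ l, s * x (Sum.inl i) * x (Sum.inr l) := by
    intro i
    rw [Fintype.sum_sum_type]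
    simp [blockSum]
  have e2 : ∀ i : Fin h, ∑ l, blockSum A₁ A₂ s (Sum.inr i) l * x (Sum.inr i) * x l
      = (∑ l, s * x (Sum.inl l) * x (Sum.inr i))
        + ∑ l, A₂ i l * x (Sum.inr i) * x (Sum.inr l) := by
    intro i
    rw [Fintype.sum_sum_type]
    simp only [blockSum, Matrix.fromBlocks_apply₂₁, Matrix.fromBlocks_apply₂₂, Matrix.of_apply]
    congr 1
    exact Finset.sum_congr rfl fun l _ => by ring
  rw [Finset.sum_congr rfl (fun i _ => e1 i), Finset.sum_congr rfl (fun i _ => e2 i)]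
  rw [Finset.sum_add_distrib, Finset.sum_add_distrib]
  have e3 := cross_sum s x
  have e4 : ∑ i : Fin h, ∑ l : Fin g, s * x (Sum.inl l) * x (Sum.inr i)
      = s * ((∑ i, x (Sum.inl i)) * (∑ i, x (Sum.inr i))) := by
    rw [Finset.sum_comm]
    exact cross_sum s x
  rw [e3, e4]
  ring

lemma blockSum_posDef {η s : ℝ} (hη : 0 < η) {g h : ℕ}
    {A₁ : Matrix (Fin g) (Fin g) ℝ} {A₂ : Matrix (Fin h) (Fin h) ℝ}
    (hA₁ : MemUltra η A₁) (hA₂ : MemUltra η A₂)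
    (hs0 : 0 ≤ s) (hs1 : s ≤ 1 - η)
    (hsA₁ : ∀ i l, i ≠ l → s ≤ A₁ i l) (hsA₂ : ∀ i l, i ≠ l → s ≤ A₂ i l) :
    (blockSum A₁ A₂ s).PosDef := by
  rw [Matrix.posDef_iff_dotProduct_mulVec]
  constructor
  · rw [Matrix.IsHermitian, Matrix.conjTranspose]
    ext i l
    rcases i with i | i <;> rcases l with l | l <;>
      simp [blockSum, hA₁.1.apply, hA₂.1.apply]
  · intro x hx
    have hq : star x ⬝ᵥ blockSum A₁ A₂ s *ᵥ x
        = ∑ i, ∑ l, blockSum A₁ A₂ s i l * x i * x l := by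
      simpa using dot_qf (blockSum A₁ A₂ s) x
    rw [hq, blockSum_qf]
    have hk1 := key (Fintype.card (Fin g)) (Fin g) le_rfl η A₁ s hη hA₁ hs0 hs1 hsA₁
      (fun i => x (Sum.inl i))
    have hk2 := key (Fintype.card (Fin h)) (Fin h) le_rfl η A₂ s hη hA₂ hs0 hs1 hsA₂
      (fun i => x (Sum.inr i))
    have hsq : 0 < ∑ i, (x i)^2 := sum_sq_pos x hx
    rw [Fintype.sum_sum_type] at hsq
    nlinarith [sq_nonneg ((∑ i, x (Sum.inl i)) + ∑ i, x (Sum.inr i))]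

lemma chi_blockSum {g h : ℕ} {A₁ : Matrix (Fin g) (Fin g) ℝ} {A₂ : Matrix (Fin h) (Fin h) ℝ}
    {s : ℝ} (h₁ : IsUnit A₁.det) (h₂ : IsUnit A₂.det)
    (hA : IsUnit (blockSum A₁ A₂ s).det)
    (hD : 1 - s^2 * chi A₁ * chi A₂ ≠ 0) :
    chi (blockSum A₁ A₂ s)
      = (chi A₁ + chi A₂ - 2*s*chi A₁*chi A₂) / (1 - s^2 * chi A₁ * chi A₂) := by
  set x := chi A₁ with hxdef
  set y := chi A₂ with hydef
  set u₁ : Fin g → ℝ := A₁⁻¹ *ᵥ (fun _ => 1) with hu₁def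
  set u₂ : Fin h → ℝ := A₂⁻¹ *ᵥ (fun _ => 1) with hu₂def
  have hx : ∑ i, u₁ i = x := (chi_eq_sum_mulVec A₁).symm
  have hy : ∑ i, u₂ i = y := (chi_eq_sum_mulVec A₂).symm
  set a : ℝ := (1 - s*y) / (1 - s^2*x*y) with hadef
  set b : ℝ := (1 - s*x) / (1 - s^2*x*y) with hbdef
  set w : Fin g ⊕ Fin h → ℝ := Sum.elim (fun i => a * u₁ i) (fun i => b * u₂ i) with hwdef
  have hu₁ : A₁ *ᵥ u₁ = fun _ => (1:ℝ) := by
    rw [hu₁def, Matrix.mulVec_mulVec, Matrix.mul_nonsing_inv A₁ h₁, Matrix.one_mulVec]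
  have hu₂ : A₂ *ᵥ u₂ = fun _ => (1:ℝ) := by
    rw [hu₂def, Matrix.mulVec_mulVec, Matrix.mul_nonsing_inv A₂ h₂, Matrix.one_mulVec]
  have hAw : blockSum A₁ A₂ s *ᵥ w = fun _ => (1:ℝ) := by
    funext i
    rcases i with i | i
    · have e : (blockSum A₁ A₂ s *ᵥ w) (Sum.inl i)
          = a * (∑ l, A₁ i l * u₁ l) + s * b * (∑ l, u₂ l) := by
        rw [Matrix.mulVec, dotProduct, Fintype.sum_sum_type]
        simp only [blockSum, Matrix.fromBlocks_apply₁₁, Matrix.fromBlocks_apply₁₂,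
          Matrix.of_apply, hwdef, Sum.elim_inl, Sum.elim_inr]
        rw [Finset.mul_sum, Finset.mul_sum]
        congr 1
        · exact Finset.sum_congr rfl fun l _ => by ring
        · exact Finset.sum_congr rfl fun l _ => by ring
      have h1i : ∑ l, A₁ i l * u₁ l = 1 := by
        have := congrFun hu₁ i
        rw [Matrix.mulVec, dotProduct] at this
        exact this
      rw [e, h1i, hy, hadef, hbdef]
      linear_combination mul_inv_cancel₀ hD
    · have e : (blockSum A₁ A₂ s *ᵥ w) (Sum.inr i)
          = s * a * (∑ l, u₁ l) + b * (∑ l, A₂ i l * u₂ l) := by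
        rw [Matrix.mulVec, dotProduct, Fintype.sum_sum_type]
        simp only [blockSum, Matrix.fromBlocks_apply₂₁, Matrix.fromBlocks_apply₂₂,
          Matrix.of_apply, hwdef, Sum.elim_inl, Sum.elim_inr]
        rw [Finset.mul_sum, Finset.mul_sum]
        congr 1
        · exact Finset.sum_congr rfl fun l _ => by ring
        · exact Finset.sum_congr rfl fun l _ => by ring
      have h2i : ∑ l, A₂ i l * u₂ l = 1 := by
        have := congrFun hu₂ i
        rw [Matrix.mulVec, dotProduct] at this
        exact this
      rw [e, h2i, hx, hadef, hbdef]
      linear_combination mul_inv_cancel₀ hD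
  have hwinv : (blockSum A₁ A₂ s)⁻¹ *ᵥ (fun _ => (1:ℝ)) = w := by
    rw [← hAw, Matrix.mulVec_mulVec, Matrix.nonsing_inv_mul _ hA, Matrix.one_mulVec]
  rw [chi_eq_sum_mulVec, hwinv, Fintype.sum_sum_type]
  simp only [hwdef, Sum.elim_inl, Sum.elim_inr]
  rw [← Finset.mul_sum, ← Finset.mul_sum, hx, hy, hadef, hbdef]
  field_simp
  ring


/-- Lemma r2: if `A = A₁ ⊞_s A₂` and `Ā = Ā₁ ⊞_s Ā₂` with
`χ(A₁) ≥ χ(Ā₁)` and `χ(A₂) ≥ χ(Ā₂)`, then `χ(A) ≥ χ(Ā)`. -/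
theorem chi_blockSum_monotone {η : ℝ} (hη : 0 < η) {g h : ℕ}
    (A₁ B₁ : Matrix (Fin g) (Fin g) ℝ) (A₂ B₂ : Matrix (Fin h) (Fin h) ℝ)
    (hA₁ : MemUltra η A₁) (hB₁ : MemUltra η B₁)
    (hA₂ : MemUltra η A₂) (hB₂ : MemUltra η B₂) (s : ℝ)
    (hs0 : 0 ≤ s) (hsη : s ≤ 1 - η)
    (hsA₁ : ∀ i l, i ≠ l → s ≤ A₁ i l) (hsB₁ : ∀ i l, i ≠ l → s ≤ B₁ i l)
    (hsA₂ : ∀ i l, i ≠ l → s ≤ A₂ i l) (hsB₂ : ∀ i l, i ≠ l → s ≤ B₂ i l)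
    (h₁ : chi B₁ ≤ chi A₁) (h₂ : chi B₂ ≤ chi A₂) :
    chi (blockSum B₁ B₂ s) ≤ chi (blockSum A₁ A₂ s) := by
  obtain ⟨hx0, hx1⟩ := chi_facts hη hA₁ hs0 hsη hsA₁
  obtain ⟨hp0, hp1⟩ := chi_facts hη hB₁ hs0 hsη hsB₁
  obtain ⟨hy0, hy1⟩ := chi_facts hη hA₂ hs0 hsη hsA₂
  obtain ⟨hq0, hq1⟩ := chi_facts hη hB₂ hs0 hsη hsB₂
  set x := chi A₁
  set p := chi B₁
  set y := chi A₂
  set q := chi B₂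
  have hsx : 0 ≤ s * x := mul_nonneg hs0 hx0
  have hsp : 0 ≤ s * p := mul_nonneg hs0 hp0
  have hsy : 0 ≤ s * y := mul_nonneg hs0 hy0
  have hsq : 0 ≤ s * q := mul_nonneg hs0 hq0
  have hDxy : 0 < 1 - s^2 * x * y := by nlinarith
  have hDpq : 0 < 1 - s^2 * p * q := by nlinarith
  have hDxq : 0 < 1 - s^2 * x * q := by nlinarith
  have hAdet := (memUltra_posDef hη hA₁ hs0 hsη hsA₁).det_pos.ne'.isUnit
  have hBdet := (memUltra_posDef hη hB₁ hs0 hsη hsB₁).det_pos.ne'.isUnit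
  have hA2det := (memUltra_posDef hη hA₂ hs0 hsη hsA₂).det_pos.ne'.isUnit
  have hB2det := (memUltra_posDef hη hB₂ hs0 hsη hsB₂).det_pos.ne'.isUnit
  have hblA := (blockSum_posDef hη hA₁ hA₂ hs0 hsη hsA₁ hsA₂).det_pos.ne'.isUnit
  have hblB := (blockSum_posDef hη hB₁ hB₂ hs0 hsη hsB₁ hsB₂).det_pos.ne'.isUnit
  rw [chi_blockSum hAdet hA2det hblA (ne_of_gt hDxy),
    chi_blockSum hBdet hB2det hblB (ne_of_gt hDpq)]
  have step1 : (p + q - 2*s*p*q) / (1 - s^2*p*q) ≤ (x + q - 2*s*x*q) / (1 - s^2*x*q) := by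
    rw [div_le_div_iff₀ hDpq hDxq]
    nlinarith [mul_nonneg (sub_nonneg.mpr h₁) (sq_nonneg (1 - s*q))]
  have step2 : (x + q - 2*s*x*q) / (1 - s^2*x*q) ≤ (x + y - 2*s*x*y) / (1 - s^2*x*y) := by
    rw [div_le_div_iff₀ hDxq hDxy]
    nlinarith [mul_nonneg (sub_nonneg.mpr h₂) (sq_nonneg (1 - s*x))]
  linarith
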